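/- Let F be a field of characteristic 0, β ∈ F nonzero, and φ the F-algebra automorphism of F[t] determined by φ(t) = t + β. Then the only ideals J of F[t] satisfying φ(J) ⊆ J are J = 0 and J = F[t]. -/

import Mathlib

open Polynomial

/-- Let `F` be a field of characteristic `0`, `β ≠ 0`, and `φ` the
`F`-algebra automorphism of `F[t]` with `φ(t) = t + C β`.  Then the only `φ`-stable ideals
of `F[t]` are `0` and `F[t]`. -/
theorem stmt_6 {F : Type*} [Field F] [CharZero F] (β : F) (hβ : β ≠ 0)
    (φ : Polynomial F ≃ₐ[F] Polynomial F)
    (hφ : φ X = X + C β)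
    (J : Ideal (Polynomial F)) (hstab : ∀ f ∈ J, φ f ∈ J) :
    J = ⊥ ∨ J = ⊤ := by
  -- φ is composition with X + C β
  have hcomp : ∀ f : Polynomial F, φ f = f.comp (X + C β) := by
    intro f
    have : (φ : Polynomial F →ₐ[F] Polynomial F) = aeval (X + C β) := by
      apply Polynomial.algHom_ext
      simpa using hφ
    have h1 : φ f = aeval (X + C β) f := by
      rw [← this]; rfl
    rw [h1, aeval_def, comp]
    rfl
  obtain ⟨g, hg⟩ := (IsPrincipalIdealRing.principal J).principal
  by_cases hg0 : g = 0
  · left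
    rw [hg, hg0]
    simp
  right
  have hgmem : g ∈ J := by rw [hg]; exact Submodule.subset_span rfl
  have hmem : φ g ∈ J := hstab g hgmem
  have hdvd : g ∣ g.comp (X + C β) := by
    rw [← hcomp]
    rw [hg] at hmem
    exact Ideal.mem_span_singleton.mp hmem
  obtain ⟨u, hu⟩ := hdvd
  have hcne : g.comp (X + C β) ≠ 0 := by
    rw [← hcomp]
    intro h
    exact hg0 (φ.injective (by simpa using h))
  have hune : u ≠ 0 := by rintro rfl; simp [hu] at hcne
  have hdeg : (g.comp (X + C β)).natDegree = g.natDegree := by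
    rw [natDegree_comp, natDegree_X_add_C, mul_one]
  have hudeg : u.natDegree = 0 := by
    have := natDegree_mul hg0 hune
    rw [← hu, hdeg] at this
    omega
  have huC : u = C (u.coeff 0) := eq_C_of_natDegree_eq_zero hudeg
  have hlc : (g.comp (X + C β)).leadingCoeff = g.leadingCoeff := by
    rw [leadingCoeff_comp (by simp [natDegree_X_add_C])]
    simp
  have hc1 : u.coeff 0 = 1 := by
    have h2 : g.leadingCoeff * u.coeff 0 = g.leadingCoeff := by
      calc g.leadingCoeff * u.coeff 0 = (g * C (u.coeff 0)).leadingCoeff := by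
            simp [leadingCoeff_mul]
        _ = g.leadingCoeff := by rw [← huC, ← hu, hlc]
    have hlcne : g.leadingCoeff ≠ 0 := leadingCoeff_ne_zero.mpr hg0
    have h2' : g.leadingCoeff * u.coeff 0 = g.leadingCoeff * 1 := by rw [mul_one]; exact h2
    exact mul_left_cancel₀ hlcne h2'
  have hfix : g.comp (X + C β) = g := by
    rw [hu, huC, hc1]; simp
  -- g(x + β) = g(x) for all x
  have heval : ∀ x : F, g.eval (x + β) = g.eval x := by
    intro x
    conv_rhs => rw [← hfix]
    simp [eval_comp]
  have hn : ∀ n : ℕ, g.eval (n * β) = g.eval 0 := by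
    intro n
    induction n with
    | zero => simp
    | succ n ih =>
        have : ((n : F) + 1) * β = n * β + β := by ring
        rw [Nat.cast_add, Nat.cast_one, this, heval, ih]
  -- g - C (g.eval 0) has infinitely many roots
  set q : Polynomial F := g - C (g.eval 0) with hq
  have hroots : ∀ n : ℕ, q.IsRoot (n * β) := by
    intro n
    simp [hq, IsRoot, hn n]
  have hqz : q = 0 := by
    apply eq_zero_of_infinite_isRoot
    apply Set.Infinite.mono (s := Set.range fun n : ℕ => (n : F) * β)
    · rintro x ⟨n, rfl⟩; exact hroots n
    · apply Set.infinite_range_of_injective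
      intro a b hab
      have : (a : F) = b := by
        exact mul_right_cancel₀ hβ hab
      exact_mod_cast this
  have hgc : g = C (g.eval 0) := by
    have := sub_eq_zero.mp hqz
    exact this
  have hne : g.eval 0 ≠ 0 := by
    intro h
    rw [h, map_zero] at hgc
    exact hg0 hgc
  rw [hg, hgc]
  exact Ideal.span_singleton_eq_top.mpr (isUnit_C.mpr (isUnit_iff_ne_zero.mpr hne))
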